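/- ASM transitions respect isomorphisms: if ζ : X ≅ Y is an isomorphism of structures over the program's vocabulary, then ζ maps Δ⁺_P(X) to Δ⁺_P(Y), i.e., an update f(ā) ↦ b belongs to Δ⁺_P(X) iff f(ζ(ā)) ↦ ζ(b) belongs to Δ⁺_P(Y). Consequently ζ is also an isomorphism from τ(X) to τ(Y). -/

import Mathlib

/-- Ground terms over a vocabulary: a type `F` of function symbols with arities `ar`. -/
inductive Term (F : Type) (ar : F → ℕ) : Type
  | app (f : F) (args : Fin (ar f) → Term F ar) : Term F ar

/-- A (first-order) structure over the vocabulary `(F, ar)` with carrier `D`: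
an interpretation of each `k`-ary symbol as a `k`-ary function on `D`. -/
structure Struc (F : Type) (ar : F → ℕ) (D : Type) where
  interp : (f : F) → (Fin (ar f) → D) → D

/-- Evaluation of a ground term in a structure. -/
def eval {F : Type} {ar : F → ℕ} {D : Type} (X : Struc F ar D) : Term F ar → D
  | .app f args => X.interp f fun i => eval X (args i)

/-- Propositional combinations of equalities between ground terms. -/
inductive Cond (F : Type) (ar : F → ℕ) : Type
  | eq (s t : Term F ar)
  | not (c : Cond F ar)
  | and (c d : Cond F ar)
  | or (c d : Cond F ar)

/-- Truth of a condition in a structure. -/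
def condHolds {F : Type} {ar : F → ℕ} {D : Type} (X : Struc F ar D) : Cond F ar → Prop
  | .eq s t => eval X s = eval X t
  | .not c => ¬ condHolds X c
  | .and c d => condHolds X c ∧ condHolds X d
  | .or c d => condHolds X c ∨ condHolds X d

/-- ASM programs: assignments `f(s₁,…,sₙ) := t`, conditionals, and parallel composition. -/
inductive Prog (F : Type) (ar : F → ℕ) : Type
  | skip
  | assign (f : F) (args : Fin (ar f) → Term F ar) (rhs : Term F ar)
  | cond (c : Cond F ar) (thn els : Prog F ar)
  | par (p q : Prog F ar)

/-- A location `f(ā)` in a structure with carrier `D`. -/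
def Loc (F : Type) (ar : F → ℕ) (D : Type) : Type := Σ f : F, Fin (ar f) → D

open Classical in
/-- The proposed update set Δ⁺_P(X): a singleton for an assignment, the update set of
the selected branch for a conditional, and the union for parallel composition. -/
noncomputable def deltaPlus {F : Type} {ar : F → ℕ} {D : Type} :
    Prog F ar → Struc F ar D → Set (Loc F ar D × D)
  | .skip, _ => ∅
  | .assign f args rhs, X => {(⟨f, fun i => eval X (args i)⟩, eval X rhs)}
  | .cond c p q, X => if condHolds X c then deltaPlus p X else deltaPlus q X
  | .par p q, X => deltaPlus p X ∪ deltaPlus q X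

/-- An update set is clash-free if no two of its updates share a location but differ in value. -/
def clashFree {F : Type} {ar : F → ℕ} {D : Type} (Δ : Set (Loc F ar D × D)) : Prop :=
  ∀ (l : Loc F ar D) (b b' : D), (l, b) ∈ Δ → (l, b') ∈ Δ → b = b'

/-- The graph of a structure, viewed as the set of its location–value points `f(ā) ↦ b`. -/
def graph {F : Type} {ar : F → ℕ} {D : Type} (X : Struc F ar D) : Set (Loc F ar D × D) :=
  {p | X.interp p.1.1 p.1.2 = p.2}

/-- The (non-trivial) update set Δ_P(X) = Δ⁺_P(X) \ X. -/
noncomputable def Delta {F : Type} {ar : F → ℕ} {D : Type}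
    (P : Prog F ar) (X : Struc F ar D) : Set (Loc F ar D × D) :=
  deltaPlus P X \ graph X

open Classical in
/-- Applying an update set to a structure: updated locations get their new value,
all other locations keep their old value. -/
noncomputable def applyUpd {F : Type} {ar : F → ℕ} {D : Type}
    (Δ : Set (Loc F ar D × D)) (X : Struc F ar D) : Struc F ar D :=
  ⟨fun f args => if h : ∃ b, (⟨f, args⟩, b) ∈ Δ then h.choose else X.interp f args⟩

/-- The next state τ_P(X), obtained by applying the non-trivial updates Δ_P(X) to `X`. -/
noncomputable def tau {F : Type} {ar : F → ℕ} {D : Type}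
    (P : Prog F ar) (X : Struc F ar D) : Struc F ar D :=
  applyUpd (Delta P X) X

/-- `ζ : X ≅ Y`: a bijection of carriers commuting with all interpretations. -/
def IsIso {F : Type} {ar : F → ℕ} {D E : Type} (ζ : D ≃ E)
    (X : Struc F ar D) (Y : Struc F ar E) : Prop :=
  ∀ (f : F) (args : Fin (ar f) → D),
    ζ (X.interp f args) = Y.interp f fun i => ζ (args i)

/-- Map a point `f(ā) ↦ b` along a bijection `ζ`. -/
def zmap {F : Type} {ar : F → ℕ} {D E : Type} (ζ : D ≃ E)
    (p : Loc F ar D × D) : Loc F ar E × E :=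
  (⟨p.1.1, fun i => ζ (p.1.2 i)⟩, ζ p.2)

lemma zmap_inj {F : Type} {ar : F → ℕ} {D E : Type} (ζ : D ≃ E) :
    Function.Injective (zmap (F := F) (ar := ar) ζ) := by
  rintro ⟨⟨f, a⟩, b⟩ ⟨⟨g, c⟩, d⟩ h
  simp only [zmap] at h
  have h1 : (⟨f, fun i => ζ (a i)⟩ : Loc F ar E) = ⟨g, fun i => ζ (c i)⟩ :=
    congrArg Prod.fst h
  have h2 : ζ b = ζ d := congrArg Prod.snd h
  obtain ⟨hf, ha⟩ := Sigma.ext_iff.mp h1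
  subst hf
  have ha' := eq_of_heq ha
  have : a = c := funext fun i => ζ.injective (congrFun ha' i)
  subst this
  simp [ζ.injective h2]

lemma eval_iso {F : Type} {ar : F → ℕ} {D E : Type} {ζ : D ≃ E}
    {X : Struc F ar D} {Y : Struc F ar E} (hζ : IsIso ζ X Y) :
    ∀ t : Term F ar, ζ (eval X t) = eval Y t
  | .app f args => by
    simp only [eval, hζ f]
    congr 1
    exact funext fun i => eval_iso hζ (args i)

lemma cond_iso {F : Type} {ar : F → ℕ} {D E : Type} {ζ : D ≃ E}
    {X : Struc F ar D} {Y : Struc F ar E} (hζ : IsIso ζ X Y) :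
    ∀ c : Cond F ar, condHolds X c ↔ condHolds Y c
  | .eq s t => by
    simp only [condHolds]
    constructor
    · intro h; rw [← eval_iso hζ s, ← eval_iso hζ t, h]
    · intro h; apply ζ.injective; rw [eval_iso hζ s, eval_iso hζ t, h]
  | .not c => by simp only [condHolds, cond_iso hζ c]
  | .and c d => by simp only [condHolds, cond_iso hζ c, cond_iso hζ d]
  | .or c d => by simp only [condHolds, cond_iso hζ c, cond_iso hζ d]

lemma mem_deltaPlus_iso {F : Type} {ar : F → ℕ} {D E : Type} {ζ : D ≃ E}
    {X : Struc F ar D} {Y : Struc F ar E} (hζ : IsIso ζ X Y) :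
    ∀ (P : Prog F ar) (p : Loc F ar D × D),
      p ∈ deltaPlus P X ↔ zmap ζ p ∈ deltaPlus P Y
  | .skip, p => by simp [deltaPlus]
  | .assign f args rhs, p => by
    have hz : zmap ζ ((⟨f, fun i => eval X (args i)⟩ : Loc F ar D), eval X rhs)
        = ((⟨f, fun i => eval Y (args i)⟩ : Loc F ar E), eval Y rhs) := by
      simp only [zmap, eval_iso hζ]
      rfl
    simp only [deltaPlus, Set.mem_singleton_iff, ← hz]
    exact ⟨fun h => by subst h; exact hz, fun h => zmap_inj ζ (h.trans hz.symm)⟩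
  | .cond c pp q, p => by
    simp only [deltaPlus]
    by_cases h : condHolds X c
    · rw [if_pos h, if_pos ((cond_iso hζ c).mp h)]
      exact mem_deltaPlus_iso hζ pp p
    · rw [if_neg h, if_neg (fun hc => h ((cond_iso hζ c).mpr hc))]
      exact mem_deltaPlus_iso hζ q p
  | .par pp q, p => by
    simp only [deltaPlus, Set.mem_union, mem_deltaPlus_iso hζ pp p,
      mem_deltaPlus_iso hζ q p]

lemma mem_Delta_iso {F : Type} {ar : F → ℕ} {D E : Type} {ζ : D ≃ E}
    {X : Struc F ar D} {Y : Struc F ar E} (hζ : IsIso ζ X Y)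
    (P : Prog F ar) (p : Loc F ar D × D) :
    p ∈ Delta P X ↔ zmap ζ p ∈ Delta P Y := by
  obtain ⟨⟨f, a⟩, b⟩ := p
  simp only [Delta, Set.mem_diff, mem_deltaPlus_iso hζ P, graph, Set.mem_setOf_eq,
    zmap]
  constructor
  · rintro ⟨h1, h2⟩
    exact ⟨h1, fun hg => h2 (by apply ζ.injective; rw [hζ]; exact hg)⟩
  · rintro ⟨h1, h2⟩
    exact ⟨h1, fun hg => h2 (by rw [← hζ, hg])⟩

/-- ASM transitions respect isomorphisms: if `ζ : X ≅ Y` then an update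
`f(ā) ↦ b` belongs to Δ⁺_P(X) iff `f(ζ(ā)) ↦ ζ(b)` belongs to Δ⁺_P(Y); consequently
(assuming no clashes) `ζ` is also an isomorphism from `τ(X)` to `τ(Y)`. -/
theorem deltaPlus_respects_iso {F : Type} {ar : F → ℕ} {D E : Type}
    (P : Prog F ar) (X : Struc F ar D) (Y : Struc F ar E) (ζ : D ≃ E)
    (hζ : IsIso ζ X Y) :
    (∀ (f : F) (a : Fin (ar f) → D) (b : D),
        (⟨f, a⟩, b) ∈ deltaPlus P X ↔
          ((⟨f, fun i => ζ (a i)⟩ : Loc F ar E), ζ b) ∈ deltaPlus P Y) ∧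
    (clashFree (deltaPlus P X) → clashFree (deltaPlus P Y) →
      IsIso ζ (tau P X) (tau P Y)) := by
  refine ⟨fun f a b => mem_deltaPlus_iso hζ P (⟨f, a⟩, b), fun hcX hcY f args => ?_⟩
  simp only [tau, applyUpd]
  by_cases hX : ∃ b, ((⟨f, args⟩ : Loc F ar D), b) ∈ Delta P X
  · have hY : ∃ b, ((⟨f, fun i => ζ (args i)⟩ : Loc F ar E), b) ∈ Delta P Y :=
      ⟨ζ hX.choose, (mem_Delta_iso hζ P _).mp hX.choose_spec⟩
    rw [dif_pos (by exact hX), dif_pos (by exact hY)]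
    have h1 : ((⟨f, fun i => ζ (args i)⟩ : Loc F ar E), ζ hX.choose) ∈ deltaPlus P Y :=
      ((mem_Delta_iso hζ P _).mp hX.choose_spec).1
    exact hcY _ _ _ h1 hY.choose_spec.1
  · have hY : ¬ ∃ b, ((⟨f, fun i => ζ (args i)⟩ : Loc F ar E), b) ∈ Delta P Y := by
      rintro ⟨b, hb⟩
      exact hX ⟨ζ.symm b, (mem_Delta_iso hζ P (⟨f, args⟩, ζ.symm b)).mpr
        (by simp only [zmap, Equiv.apply_symm_apply]; exact hb)⟩
    rw [dif_neg (by exact hX), dif_neg (by exact hY)]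
    exact hζ f args
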